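/- Let (X,d) be a metric space. Then the set {(F,G) ∈ F*(X) × F*(X) : F ⊆ G} is closed in F*(X) × F*(X) when the first factor carries the lower topology and the second factor carries the upper Wijsman topology. In particular this set is closed for the product of the lower topology with the Wijsman topology, and for the product of the Wijsman topology with itself. -/
import Mathlib


open TopologicalSpace Set

/-- The set `F*(X)` of nonempty closed subsets of `X`. -/
abbrev NClosed (X : Type*) [TopologicalSpace X] := {F : Set X // IsClosed F ∧ F.Nonempty}

/-- Subbasis for the lower topology on `F*(X)`: the sets `{F | F ∩ U ≠ ∅}` for `U` open. -/
def lowerSets (X : Type*) [TopologicalSpace X] : Set (Set (NClosed X)) :=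
  {S : Set (NClosed X) | ∃ U : Set X, IsOpen U ∧ S = {F : NClosed X | (F.1 ∩ U).Nonempty}}

/-- The lower topology on `F*(X)`. -/
def lowerTopN (X : Type*) [TopologicalSpace X] : TopologicalSpace (NClosed X) :=
  TopologicalSpace.generateFrom (lowerSets X)

/-- Subbasis making each `F ↦ d(x, F)` lower semicontinuous. -/
def upperWijsSets (X : Type*) [MetricSpace X] : Set (Set (NClosed X)) :=
  {S : Set (NClosed X) |
    ∃ (x : X) (r : ℝ), S = {F : NClosed X | r < Metric.infDist x F.1}}

/-- The upper Wijsman topology on `F*(X)`: the coarsest topology making each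
`F ↦ d(x, F)` lower semicontinuous. -/
def upperWijsTop (X : Type*) [MetricSpace X] : TopologicalSpace (NClosed X) :=
  TopologicalSpace.generateFrom (upperWijsSets X)

/-- Subbasis making each `F ↦ d(x, F)` continuous. -/
def wijsSets (X : Type*) [MetricSpace X] : Set (Set (NClosed X)) :=
  {S : Set (NClosed X) |
    ∃ (x : X) (U : Set ℝ), IsOpen U ∧
      S = (fun F : NClosed X => Metric.infDist x F.1) ⁻¹' U}

/-- The Wijsman topology on `F*(X)`: the coarsest topology making each `F ↦ d(x, F)`
continuous. -/
def wijsTop (X : Type*) [MetricSpace X] : TopologicalSpace (NClosed X) :=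
  TopologicalSpace.generateFrom (wijsSets X)

/-- For a metric space `(X, d)`, the set `{(F, G) ∈ F*(X) × F*(X) | F ⊆ G}` is closed for the
product of the lower topology with the upper Wijsman topology; in particular for the product of
the lower topology with the Wijsman topology, and for the product of the Wijsman topology with
itself. -/
theorem isClosed_subset_rel_wijsman (X : Type*) [MetricSpace X] :
    @IsClosed (NClosed X × NClosed X)
      (@instTopologicalSpaceProd _ _ (lowerTopN X) (upperWijsTop X))
      {p : NClosed X × NClosed X | p.1.1 ⊆ p.2.1} ∧
    @IsClosed (NClosed X × NClosed X)
      (@instTopologicalSpaceProd _ _ (lowerTopN X) (wijsTop X))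
      {p : NClosed X × NClosed X | p.1.1 ⊆ p.2.1} ∧
    @IsClosed (NClosed X × NClosed X)
      (@instTopologicalSpaceProd _ _ (wijsTop X) (wijsTop X))
      {p : NClosed X × NClosed X | p.1.1 ⊆ p.2.1} := by
  classical
  -- Key closedness for (lower, upper Wijsman)
  have key : @IsClosed (NClosed X × NClosed X)
      (@instTopologicalSpaceProd _ _ (lowerTopN X) (upperWijsTop X))
      {p : NClosed X × NClosed X | p.1.1 ⊆ p.2.1} := by
    rw [← @isOpen_compl_iff _ _ (@instTopologicalSpaceProd _ _ (lowerTopN X) (upperWijsTop X))]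
    have hEq : {p : NClosed X × NClosed X | p.1.1 ⊆ p.2.1}ᶜ =
        ⋃ (x : X) (r : ℝ) (_ : 0 < r),
          ({F : NClosed X | (F.1 ∩ Metric.ball x r).Nonempty} ×ˢ
            {G : NClosed X | r < Metric.infDist x G.1}) := by
      ext p
      simp only [Set.mem_compl_iff, Set.mem_setOf_eq, Set.mem_iUnion, Set.mem_prod]
      constructor
      · intro h
        rw [Set.not_subset] at h
        obtain ⟨x, hxF, hxG⟩ := h
        have hpos : 0 < Metric.infDist x p.2.1 := by
          exact (p.2.2.1.notMem_iff_infDist_pos p.2.2.2).mp hxG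
        refine ⟨x, Metric.infDist x p.2.1 / 2, by linarith, ⟨x, hxF, ?_⟩, by linarith⟩
        simpa using by linarith
      · rintro ⟨x, r, hr, ⟨y, hyF, hyB⟩, hG⟩
        intro hsub
        have h1 : Metric.infDist x p.2.1 ≤ dist x y := Metric.infDist_le_dist_of_mem (hsub hyF)
        rw [Metric.mem_ball, dist_comm] at hyB
        linarith
    rw [hEq]
    refine @isOpen_iUnion _ _ (@instTopologicalSpaceProd _ _ (lowerTopN X) (upperWijsTop X)) _ fun x =>
      @isOpen_iUnion _ _ (@instTopologicalSpaceProd _ _ (lowerTopN X) (upperWijsTop X)) _ fun r =>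
      @isOpen_iUnion _ _ (@instTopologicalSpaceProd _ _ (lowerTopN X) (upperWijsTop X)) _ fun _ => ?_
    exact @IsOpen.prod _ _ (lowerTopN X) (upperWijsTop X) _ _
      (TopologicalSpace.GenerateOpen.basic _ ⟨Metric.ball x r, Metric.isOpen_ball, rfl⟩)
      (TopologicalSpace.GenerateOpen.basic _ ⟨x, r, rfl⟩)
  have hwu : wijsTop X ≤ upperWijsTop X := by
    apply le_generateFrom
    rintro S ⟨x, r, rfl⟩
    have : {F : NClosed X | r < Metric.infDist x F.1} =
        (fun F : NClosed X => Metric.infDist x F.1) ⁻¹' Set.Ioi r := rfl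
    rw [this]
    exact TopologicalSpace.GenerateOpen.basic _ ⟨x, Set.Ioi r, isOpen_Ioi, rfl⟩
  have hwl : wijsTop X ≤ lowerTopN X := by
    apply le_generateFrom
    rintro S ⟨U, hU, rfl⟩
    have hEq : {F : NClosed X | (F.1 ∩ U).Nonempty} =
        ⋃ (x : X) (r : ℝ) (_ : Metric.ball x r ⊆ U),
          {F : NClosed X | Metric.infDist x F.1 < r} := by
      ext F
      simp only [Set.mem_setOf_eq, Set.mem_iUnion]
      constructor
      · rintro ⟨y, hyF, hyU⟩
        obtain ⟨r, hr, hball⟩ := Metric.isOpen_iff.mp hU y hyU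
        exact ⟨y, r, hball, by rw [Metric.infDist_zero_of_mem hyF]; exact hr⟩
      · rintro ⟨x, r, hball, hlt⟩
        obtain ⟨y, hyF, hd⟩ := (Metric.infDist_lt_iff F.2.2).mp hlt
        exact ⟨y, hyF, hball (by rwa [Metric.mem_ball, dist_comm])⟩
    rw [hEq]
    refine @isOpen_iUnion _ _ (wijsTop X) _ fun x => @isOpen_iUnion _ _ (wijsTop X) _ fun r =>
      @isOpen_iUnion _ _ (wijsTop X) _ fun _ => ?_
    have : {F : NClosed X | Metric.infDist x F.1 < r} =
        (fun F : NClosed X => Metric.infDist x F.1) ⁻¹' Set.Iio r := rfl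
    rw [this]
    exact TopologicalSpace.GenerateOpen.basic _ ⟨x, Set.Iio r, isOpen_Iio, rfl⟩
  have mono : ∀ (t₁ t₂ s₁ s₂ : TopologicalSpace (NClosed X)), t₁ ≤ s₁ → t₂ ≤ s₂ →
      (@instTopologicalSpaceProd (NClosed X) (NClosed X) t₁ t₂ : TopologicalSpace (NClosed X × NClosed X)) ≤
        @instTopologicalSpaceProd (NClosed X) (NClosed X) s₁ s₂ := by
    intro t₁ t₂ s₁ s₂ h1 h2
    exact inf_le_inf (induced_mono h1) (induced_mono h2)
  refine ⟨key, ?_, ?_⟩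
  · exact @IsClosed.mono _ _ _ _ key (mono _ _ _ _ le_rfl hwu)
  · exact @IsClosed.mono _ _ _ _ key (mono _ _ _ _ hwl hwu)
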